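/- Let G be a connected weighted graph with nonnegative edge lengths and 𝒢 its continuous graph, and let H be a connected subgraph of G with continuous subgraph ℋ. Then the diameter of ℋ with respect to 𝒢, i.e. sup over p,q ∈ ℋ of d_𝒢(p,q), equals one half of the maximum over ordered pairs of edges aa', bb' of H of the length of a shortest closed walk in G passing through all interior points of aa' and of bb'. -/

import Mathlib

open SimpleGraph

variable {V : Type*}

/-- Length of a walk in a weighted graph: the sum of the lengths of its edges,
counted with multiplicity. -/
noncomputable def walkLen (ℓ : V → V → ℝ) {G : SimpleGraph V} {a b : V} (w : G.Walk a b) : ℝ :=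
  (w.darts.map (fun d => ℓ d.toProd.1 d.toProd.2)).sum

/-- Shortest-path distance in the weighted graph: infimum of walk lengths. -/
noncomputable def gdist (G : SimpleGraph V) (ℓ : V → V → ℝ) (a b : V) : ℝ :=
  sInf {x | ∃ w : G.Walk a b, walkLen ℓ w = x}

/-- Endpoint (`u` or `v`) of the edge carrying a point `(u, v, lam)` of the continuous graph. -/
def ept (p : V × V × ℝ) : Bool → V := fun i => if i then p.2.1 else p.1

/-- Offset of a point `(u, v, lam)` of the continuous graph to the chosen endpoint of its edge. -/
def off (ℓ : V → V → ℝ) (p : V × V × ℝ) : Bool → ℝ :=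
  fun i => if i then ℓ p.1 p.2.1 - p.2.2 else p.2.2

/-- Geodesic distance between two points of the continuous graph `𝒢` of `G`:
a point `(u, v, lam)` lies on edge `uv` at distance `lam` along the edge from `u`.
It is the infimum of the lengths of all connections: leave the first edge through one of
its endpoints, walk in `G`, and enter the second edge through one of its endpoints;
or, if both points lie on the same edge, travel directly along that edge. -/
noncomputable def pdist (G : SimpleGraph V) (ℓ : V → V → ℝ) (p q : V × V × ℝ) : ℝ :=
  sInf ({x | ∃ (i j : Bool) (w : G.Walk (ept p i) (ept q j)),
        x = off ℓ p i + walkLen ℓ w + off ℓ q j}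
    ∪ {x | (p.1, p.2.1) = (q.1, q.2.1) ∧ x = |p.2.2 - q.2.2|}
    ∪ {x | (p.1, p.2.1) = (q.2.1, q.1) ∧ x = |p.2.2 - (ℓ q.1 q.2.1 - q.2.2)|})


section Aux

variable {G : SimpleGraph V} {ℓ : V → V → ℝ}

lemma walkLen_nil {a : V} : walkLen ℓ (Walk.nil : G.Walk a a) = 0 := rfl

lemma walkLen_cons {u v w : V} (h : G.Adj u v) (p : G.Walk v w) :
    walkLen ℓ (Walk.cons h p) = ℓ u v + walkLen ℓ p := by
  simp [walkLen, Walk.darts_cons]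

lemma walkLen_append {u v w : V} (p : G.Walk u v) (q : G.Walk v w) :
    walkLen ℓ (p.append q) = walkLen ℓ p + walkLen ℓ q := by
  simp [walkLen, Walk.darts_append]

lemma walkLen_reverse (hsym : ∀ u v, ℓ u v = ℓ v u) {u v : V} (p : G.Walk u v) :
    walkLen ℓ p.reverse = walkLen ℓ p := by
  simp only [walkLen, Walk.darts_reverse, List.map_reverse, List.sum_reverse, List.map_map]
  congr 1
  apply List.map_congr_left
  intro d _
  exact (hsym d.toProd.1 d.toProd.2).symm

lemma walkLen_nonneg (hnn : ∀ u v, 0 ≤ ℓ u v) {u v : V} (p : G.Walk u v) :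
    0 ≤ walkLen ℓ p := by
  apply List.sum_nonneg
  intro x hx
  obtain ⟨d, _, rfl⟩ := List.mem_map.mp hx
  exact hnn _ _

lemma gdist_bddBelow (hnn : ∀ u v, 0 ≤ ℓ u v) (a b : V) :
    BddBelow {x | ∃ w : G.Walk a b, walkLen ℓ w = x} :=
  ⟨0, fun _ ⟨w, hw⟩ => hw ▸ walkLen_nonneg hnn w⟩

lemma gdist_le (hnn : ∀ u v, 0 ≤ ℓ u v) {a b : V} (w : G.Walk a b) :
    gdist G ℓ a b ≤ walkLen ℓ w :=
  csInf_le (gdist_bddBelow hnn a b) ⟨w, rfl⟩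

lemma le_gdist {a b : V} (hr : G.Reachable a b) {t : ℝ}
    (h : ∀ w : G.Walk a b, t ≤ walkLen ℓ w) : t ≤ gdist G ℓ a b := by
  refine le_csInf (hr.elim fun w => ⟨_, w, rfl⟩) ?_
  rintro x ⟨w, rfl⟩; exact h w

lemma gdist_nonneg (hnn : ∀ u v, 0 ≤ ℓ u v) {a b : V} (hr : G.Reachable a b) :
    0 ≤ gdist G ℓ a b :=
  le_gdist hr fun w => walkLen_nonneg hnn w

lemma gdist_symm (hsym : ∀ u v, ℓ u v = ℓ v u) (hnn : ∀ u v, 0 ≤ ℓ u v)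
    {a b : V} (hr : G.Reachable a b) : gdist G ℓ a b = gdist G ℓ b a := by
  have key : ∀ (u v : V), G.Reachable u v → gdist G ℓ u v ≤ gdist G ℓ v u := by
    intro u v huv
    refine le_csInf (huv.symm.elim fun w => ⟨_, w, rfl⟩) ?_
    rintro x ⟨w, rfl⟩
    calc gdist G ℓ u v ≤ walkLen ℓ w.reverse :=
          csInf_le (gdist_bddBelow hnn u v) ⟨w.reverse, rfl⟩
      _ = walkLen ℓ w := walkLen_reverse hsym w
  exact le_antisymm (key a b hr) (key b a hr.symm)

lemma gdist_le_edge_right (hnn : ∀ u v, 0 ≤ ℓ u v) {x u v : V} (hadj : G.Adj u v)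
    (hr : G.Reachable x u) : gdist G ℓ x v ≤ gdist G ℓ x u + ℓ u v := by
  have : gdist G ℓ x v - ℓ u v ≤ gdist G ℓ x u := by
    refine le_gdist hr fun w => ?_
    have := gdist_le (G := G) (ℓ := ℓ) hnn (w.append (Walk.cons hadj Walk.nil))
    rw [walkLen_append, walkLen_cons, walkLen_nil] at this
    linarith
  linarith

lemma gdist_le_edge_left (hnn : ∀ u v, 0 ≤ ℓ u v) {u v y : V} (hadj : G.Adj u v)
    (hr : G.Reachable v y) : gdist G ℓ u y ≤ ℓ u v + gdist G ℓ v y := by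
  have : gdist G ℓ u y - ℓ u v ≤ gdist G ℓ v y := by
    refine le_gdist hr fun w => ?_
    have := gdist_le (G := G) (ℓ := ℓ) hnn (Walk.cons hadj w)
    rw [walkLen_cons] at this
    linarith
  linarith

lemma gdist_le_len (hnn : ∀ u v, 0 ≤ ℓ u v) {u v : V} (hadj : G.Adj u v) :
    gdist G ℓ u v ≤ ℓ u v := by
  have := gdist_le (G := G) (ℓ := ℓ) hnn (Walk.cons hadj Walk.nil)
  rwa [walkLen_cons, walkLen_nil, add_zero] at this

lemma walk_split {x y a a' : V} (w : G.Walk x y) (h : s(a,a') ∈ w.edges) :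
    (∃ (p : G.Walk x a) (q : G.Walk a' y),
      walkLen ℓ w = walkLen ℓ p + ℓ a a' + walkLen ℓ q ∧
      ∀ e ∈ w.edges, e = s(a,a') ∨ e ∈ p.edges ∨ e ∈ q.edges) ∨
    (∃ (p : G.Walk x a') (q : G.Walk a y),
      walkLen ℓ w = walkLen ℓ p + ℓ a' a + walkLen ℓ q ∧
      ∀ e ∈ w.edges, e = s(a,a') ∨ e ∈ p.edges ∨ e ∈ q.edges) := by
  induction w with
  | nil => simp at h
  | @cons u v z hadj w ih =>
    rw [Walk.edges_cons, List.mem_cons] at h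
    by_cases hc : s(u, v) = s(a, a')
    · rw [Sym2.eq_iff] at hc
      rcases hc with ⟨rfl, rfl⟩ | ⟨rfl, rfl⟩
      · left
        refine ⟨Walk.nil, w, ?_, ?_⟩
        · rw [walkLen_cons, walkLen_nil]; ring
        · intro e he
          rw [Walk.edges_cons, List.mem_cons] at he
          rcases he with rfl | he
          · exact Or.inl rfl
          · exact Or.inr (Or.inr he)
      · right
        refine ⟨Walk.nil, w, ?_, ?_⟩
        · rw [walkLen_cons, walkLen_nil]; ring
        · intro e he
          rw [Walk.edges_cons, List.mem_cons] at he
          rcases he with rfl | he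
          · exact Or.inl (Sym2.eq_swap)
          · exact Or.inr (Or.inr he)
    · have h' : s(a, a') ∈ w.edges := by
        rcases h with h | h
        · exact absurd h.symm hc
        · exact h
      rcases ih h' with ⟨p, q, hlen, hcov⟩ | ⟨p, q, hlen, hcov⟩
      · left
        refine ⟨Walk.cons hadj p, q, ?_, ?_⟩
        · rw [walkLen_cons, walkLen_cons, hlen]; ring
        · intro e he
          rw [Walk.edges_cons, List.mem_cons] at he
          rcases he with rfl | he
          · exact Or.inr (Or.inl (by rw [Walk.edges_cons]; exact List.mem_cons_self))
          · rcases hcov e he with h1 | h1 | h1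
            · exact Or.inl h1
            · exact Or.inr (Or.inl (by rw [Walk.edges_cons]; exact List.mem_cons_of_mem _ h1))
            · exact Or.inr (Or.inr h1)
      · right
        refine ⟨Walk.cons hadj p, q, ?_, ?_⟩
        · rw [walkLen_cons, walkLen_cons, hlen]; ring
        · intro e he
          rw [Walk.edges_cons, List.mem_cons] at he
          rcases he with rfl | he
          · exact Or.inr (Or.inl (by rw [Walk.edges_cons]; exact List.mem_cons_self))
          · rcases hcov e he with h1 | h1 | h1
            · exact Or.inl h1
            · exact Or.inr (Or.inl (by rw [Walk.edges_cons]; exact List.mem_cons_of_mem _ h1))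
            · exact Or.inr (Or.inr h1)

lemma off_nonneg {p : V × V × ℝ} (hp : p.2.2 ∈ Set.Icc 0 (ℓ p.1 p.2.1)) (i : Bool) :
    0 ≤ off ℓ p i := by
  cases i
  · exact hp.1
  · simp only [off, if_true]
    linarith [hp.2]

lemma pdist_bdd (hnn : ∀ u v, 0 ≤ ℓ u v) {p q : V × V × ℝ}
    (hp : p.2.2 ∈ Set.Icc 0 (ℓ p.1 p.2.1)) (hq : q.2.2 ∈ Set.Icc 0 (ℓ q.1 q.2.1)) :
    BddBelow ({x | ∃ (i j : Bool) (w : G.Walk (ept p i) (ept q j)),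
        x = off ℓ p i + walkLen ℓ w + off ℓ q j}
      ∪ {x | (p.1, p.2.1) = (q.1, q.2.1) ∧ x = |p.2.2 - q.2.2|}
      ∪ {x | (p.1, p.2.1) = (q.2.1, q.1) ∧ x = |p.2.2 - (ℓ q.1 q.2.1 - q.2.2)|}) := by
  refine ⟨0, ?_⟩
  rintro x ((⟨i, j, w, rfl⟩ | ⟨-, rfl⟩) | ⟨-, rfl⟩)
  · exact add_nonneg (add_nonneg (off_nonneg hp i) (walkLen_nonneg hnn w)) (off_nonneg hq j)
  · exact abs_nonneg _
  · exact abs_nonneg _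

lemma pdist_le (hnn : ∀ u v, 0 ≤ ℓ u v) {p q : V × V × ℝ}
    (hp : p.2.2 ∈ Set.Icc 0 (ℓ p.1 p.2.1)) (hq : q.2.2 ∈ Set.Icc 0 (ℓ q.1 q.2.1))
    (i j : Bool) (w : G.Walk (ept p i) (ept q j)) :
    pdist G ℓ p q ≤ off ℓ p i + walkLen ℓ w + off ℓ q j := by
  unfold pdist
  exact csInf_le (pdist_bdd hnn hp hq)
    (Set.mem_union_left _ (Set.mem_union_left _ ⟨i, j, w, rfl⟩))

lemma pdist_le_eq1 (hnn : ∀ u v, 0 ≤ ℓ u v) {p q : V × V × ℝ}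
    (hp : p.2.2 ∈ Set.Icc 0 (ℓ p.1 p.2.1)) (hq : q.2.2 ∈ Set.Icc 0 (ℓ q.1 q.2.1))
    (h : (p.1, p.2.1) = (q.1, q.2.1)) :
    pdist G ℓ p q ≤ |p.2.2 - q.2.2| := by
  unfold pdist
  exact csInf_le (pdist_bdd hnn hp hq)
    (Set.mem_union_left _ (Set.mem_union_right _ ⟨h, rfl⟩))

lemma pdist_le_eq2 (hnn : ∀ u v, 0 ≤ ℓ u v) {p q : V × V × ℝ}
    (hp : p.2.2 ∈ Set.Icc 0 (ℓ p.1 p.2.1)) (hq : q.2.2 ∈ Set.Icc 0 (ℓ q.1 q.2.1))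
    (h : (p.1, p.2.1) = (q.2.1, q.1)) :
    pdist G ℓ p q ≤ |p.2.2 - (ℓ q.1 q.2.1 - q.2.2)| := by
  unfold pdist
  exact csInf_le (pdist_bdd hnn hp hq)
    (Set.mem_union_right _ ⟨h, rfl⟩)

lemma le_pdist {t : ℝ} {p q : V × V × ℝ} (hr : G.Reachable p.1 q.1)
    (hff : ∀ w : G.Walk p.1 q.1, t ≤ p.2.2 + walkLen ℓ w + q.2.2)
    (hft : ∀ w : G.Walk p.1 q.2.1, t ≤ p.2.2 + walkLen ℓ w + (ℓ q.1 q.2.1 - q.2.2))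
    (htf : ∀ w : G.Walk p.2.1 q.1, t ≤ (ℓ p.1 p.2.1 - p.2.2) + walkLen ℓ w + q.2.2)
    (htt : ∀ w : G.Walk p.2.1 q.2.1,
      t ≤ (ℓ p.1 p.2.1 - p.2.2) + walkLen ℓ w + (ℓ q.1 q.2.1 - q.2.2))
    (h2 : (p.1, p.2.1) = (q.1, q.2.1) → t ≤ |p.2.2 - q.2.2|)
    (h3 : (p.1, p.2.1) = (q.2.1, q.1) → t ≤ |p.2.2 - (ℓ q.1 q.2.1 - q.2.2)|) :
    t ≤ pdist G ℓ p q := by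
  unfold pdist
  refine le_csInf (hr.elim fun w =>
    ⟨_, Set.mem_union_left _ (Set.mem_union_left _ ⟨false, false, w, rfl⟩)⟩) ?_
  rintro x ((⟨i, j, w, rfl⟩ | ⟨hc, rfl⟩) | ⟨hc, rfl⟩)
  · cases i <;> cases j
    · exact hff w
    · exact hft w
    · exact htf w
    · exact htt w
  · exact h2 hc
  · exact h3 hc

end Aux

section Main
variable {G : SimpleGraph V} {ℓ : V → V → ℝ}

lemma two_pdist_le (hG : G.Connected) (hsym : ∀ u v, ℓ u v = ℓ v u)
    (hnn : ∀ u v, 0 ≤ ℓ u v) {a a' b b' : V} (hab : G.Adj a a') (hbb : G.Adj b b')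
    {lam mu : ℝ} (hl : lam ∈ Set.Icc 0 (ℓ a a')) (hm : mu ∈ Set.Icc 0 (ℓ b b')) :
    2 * pdist G ℓ (a, a', lam) (b, b', mu) ≤
      sInf {y | ∃ (r : V) (w : G.Walk r r),
        s(a, a') ∈ w.edges ∧ s(b, b') ∈ w.edges ∧ walkLen ℓ w = y} := by
  have hl' : ((a, a', lam) : V × V × ℝ).2.2 ∈ Set.Icc 0 (ℓ a a') := hl
  have hm' : ((b, b', mu) : V × V × ℝ).2.2 ∈ Set.Icc 0 (ℓ b b') := hm
  refine le_csInf ?_ ?_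
  · refine (hG.preconnected a' b).elim fun w1 => (hG.preconnected b' a).elim fun w2 => ?_
    refine ⟨_, a, Walk.cons hab (w1.append (Walk.cons hbb w2)), ?_, ?_, rfl⟩
    · simp [Walk.edges_cons]
    · simp [Walk.edges_cons, Walk.edges_append]
  · rintro y ⟨r, w, he1, he2, rfl⟩
    rcases walk_split (ℓ := ℓ) w he1 with ⟨p, q, hlen, hcov⟩ | ⟨p, q, hlen, hcov⟩
    · -- p : r → a, q : a' → r ; u : a' → a
      have hulen : walkLen ℓ (q.append p) = walkLen ℓ q + walkLen ℓ p := walkLen_append q p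
      have key : s(b, b') ∈ (q.append p).edges → 2 * pdist G ℓ (a, a', lam) (b, b', mu) ≤
          walkLen ℓ w := by
        intro hmem
        rcases walk_split (ℓ := ℓ) (q.append p) hmem with ⟨u1, u2, hlen2, -⟩ | ⟨u1, u2, hlen2, -⟩
        · -- u1 : a' → b, u2 : b' → a
          have h1 : pdist G ℓ (a, a', lam) (b, b', mu) ≤
              (ℓ a a' - lam) + walkLen ℓ u1 + mu := pdist_le hnn hl' hm' true false u1
          have h2 : pdist G ℓ (a, a', lam) (b, b', mu) ≤
              lam + walkLen ℓ u2.reverse + (ℓ b b' - mu) := pdist_le hnn hl' hm' false true u2.reverse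
          have hrev := walkLen_reverse (G := G) hsym u2
          linarith
        · -- u1 : a' → b', u2 : b → a
          have h1 : pdist G ℓ (a, a', lam) (b, b', mu) ≤
              (ℓ a a' - lam) + walkLen ℓ u1 + (ℓ b b' - mu) := pdist_le hnn hl' hm' true true u1
          have h2 : pdist G ℓ (a, a', lam) (b, b', mu) ≤
              lam + walkLen ℓ u2.reverse + mu := pdist_le hnn hl' hm' false false u2.reverse
          have hrev := walkLen_reverse (G := G) hsym u2
          have hbs : ℓ b' b = ℓ b b' := hsym b' b
          linarith
      rcases hcov _ he2 with heq | hmem | hmem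
      · rcases Sym2.eq_iff.mp heq with ⟨rfl, rfl⟩ | ⟨rfl, rfl⟩
        · -- b = a, b' = a'
          have hd := pdist_le_eq1 (G := G) hnn hl' hm' rfl
          have h1 := pdist_le (G := G) hnn hl' hm' false true (q.append p).reverse
          have h2 := pdist_le (G := G) hnn hl' hm' true false (q.append p)
          have hrev := walkLen_reverse (G := G) hsym (q.append p)
          simp [off, ept] at hd h1 h2 hrev
          rcases abs_cases (lam - mu) with ⟨he, -⟩ | ⟨he, -⟩ <;> linarith
        · -- b = a', b' = a
          have hd := pdist_le_eq2 (G := G) hnn hl' hm' rfl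
          have h1 := pdist_le (G := G) hnn hl' hm' false false (q.append p).reverse
          have h2 := pdist_le (G := G) hnn hl' hm' true true (q.append p)
          have hrev := walkLen_reverse (G := G) hsym (q.append p)
          have has2 := hsym b' b
          simp [off, ept] at hd h1 h2 hrev
          rcases abs_cases (lam - (ℓ b b' - mu)) with ⟨he, -⟩ | ⟨he, -⟩ <;> linarith
      · exact key (by rw [Walk.edges_append, List.mem_append]; exact Or.inr hmem)
      · exact key (by rw [Walk.edges_append, List.mem_append]; exact Or.inl hmem)
    · -- p : r → a', q : a → r ; u : a → a'
      have hulen : walkLen ℓ (q.append p) = walkLen ℓ q + walkLen ℓ p := walkLen_append q p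
      have has : ℓ a' a = ℓ a a' := hsym a' a
      have key : s(b, b') ∈ (q.append p).edges → 2 * pdist G ℓ (a, a', lam) (b, b', mu) ≤
          walkLen ℓ w := by
        intro hmem
        rcases walk_split (ℓ := ℓ) (q.append p) hmem with ⟨u1, u2, hlen2, -⟩ | ⟨u1, u2, hlen2, -⟩
        · -- u1 : a → b, u2 : b' → a'
          have h1 : pdist G ℓ (a, a', lam) (b, b', mu) ≤
              lam + walkLen ℓ u1 + mu := pdist_le hnn hl' hm' false false u1
          have h2 : pdist G ℓ (a, a', lam) (b, b', mu) ≤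
              (ℓ a a' - lam) + walkLen ℓ u2.reverse + (ℓ b b' - mu) :=
            pdist_le hnn hl' hm' true true u2.reverse
          have hrev := walkLen_reverse (G := G) hsym u2
          linarith
        · -- u1 : a → b', u2 : b → a'
          have h1 : pdist G ℓ (a, a', lam) (b, b', mu) ≤
              lam + walkLen ℓ u1 + (ℓ b b' - mu) := pdist_le hnn hl' hm' false true u1
          have h2 : pdist G ℓ (a, a', lam) (b, b', mu) ≤
              (ℓ a a' - lam) + walkLen ℓ u2.reverse + mu := pdist_le hnn hl' hm' true false u2.reverse
          have hrev := walkLen_reverse (G := G) hsym u2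
          have hbs : ℓ b' b = ℓ b b' := hsym b' b
          linarith
      rcases hcov _ he2 with heq | hmem | hmem
      · rcases Sym2.eq_iff.mp heq with ⟨rfl, rfl⟩ | ⟨rfl, rfl⟩
        · -- b = a, b' = a'
          have hd := pdist_le_eq1 (G := G) hnn hl' hm' rfl
          have h1 := pdist_le (G := G) hnn hl' hm' false true (q.append p)
          have h2 := pdist_le (G := G) hnn hl' hm' true false (q.append p).reverse
          have hrev := walkLen_reverse (G := G) hsym (q.append p)
          simp [off, ept] at hd h1 h2 hrev
          rcases abs_cases (lam - mu) with ⟨he, -⟩ | ⟨he, -⟩ <;> linarith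
        · -- b = a', b' = a
          have hd := pdist_le_eq2 (G := G) hnn hl' hm' rfl
          have h1 := pdist_le (G := G) hnn hl' hm' false false (q.append p)
          have h2 := pdist_le (G := G) hnn hl' hm' true true (q.append p).reverse
          have hrev := walkLen_reverse (G := G) hsym (q.append p)
          have has2 := hsym b' b
          simp [off, ept] at hd h1 h2 hrev
          rcases abs_cases (lam - (ℓ b b' - mu)) with ⟨he, -⟩ | ⟨he, -⟩ <;> linarith
      · exact key (by rw [Walk.edges_append, List.mem_append]; exact Or.inr hmem)
      · exact key (by rw [Walk.edges_append, List.mem_append]; exact Or.inl hmem)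


lemma sInf_le_two_pdist (hG : G.Connected) (hsym : ∀ u v, ℓ u v = ℓ v u)
    (hnn : ∀ u v, 0 ≤ ℓ u v) {a a' b b' : V} (hab : G.Adj a a') (hbb : G.Adj b b') :
    ∃ lam mu : ℝ, lam ∈ Set.Icc 0 (ℓ a a') ∧ mu ∈ Set.Icc 0 (ℓ b b') ∧
      sInf {y | ∃ (r : V) (w : G.Walk r r),
        s(a, a') ∈ w.edges ∧ s(b, b') ∈ w.edges ∧ walkLen ℓ w = y}
      ≤ 2 * pdist G ℓ (a, a', lam) (b, b', mu) := by
  set S := {y | ∃ (r : V) (w : G.Walk r r),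
      s(a, a') ∈ w.edges ∧ s(b, b') ∈ w.edges ∧ walkLen ℓ w = y} with hS
  have hSbdd : BddBelow S := by
    refine ⟨0, ?_⟩
    rintro y ⟨r, w, -, -, rfl⟩
    exact walkLen_nonneg hnn w
  set c := sInf S with hc
  have hc0 : 0 ≤ c := Real.sInf_nonneg (by rintro y ⟨r, w, -, -, rfl⟩; exact walkLen_nonneg hnn w)
  have hstep1 : ∀ (w1 : G.Walk a' b) (w2 : G.Walk b' a),
      c ≤ ℓ a a' + walkLen ℓ w1 + ℓ b b' + walkLen ℓ w2 := by
    intro w1 w2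
    refine csInf_le hSbdd ⟨a, Walk.cons hab (w1.append (Walk.cons hbb w2)), ?_, ?_, ?_⟩
    · simp [Walk.edges_cons]
    · simp [Walk.edges_cons, Walk.edges_append]
    · rw [walkLen_cons, walkLen_append, walkLen_cons]; ring
  have hstep2 : ∀ (w1 : G.Walk a' b') (w2 : G.Walk b a),
      c ≤ ℓ a a' + walkLen ℓ w1 + ℓ b b' + walkLen ℓ w2 := by
    intro w1 w2
    refine csInf_le hSbdd ⟨a, Walk.cons hab (w1.append (Walk.cons hbb.symm w2)), ?_, ?_, ?_⟩
    · simp [Walk.edges_cons]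
    · simp [Walk.edges_cons, Walk.edges_append, Sym2.eq_swap]
    · rw [walkLen_cons, walkLen_append, walkLen_cons, hsym b' b]; ring
  have hcb1 : c ≤ ℓ a a' + gdist G ℓ a' b + ℓ b b' + gdist G ℓ b' a := by
    have t1 : ∀ w1 : G.Walk a' b, c - ℓ a a' - walkLen ℓ w1 - ℓ b b' ≤ gdist G ℓ b' a :=
      fun w1 => le_gdist (hG.preconnected b' a) fun w2 => by
        have := hstep1 w1 w2; linarith
    have t2 : c - ℓ a a' - ℓ b b' - gdist G ℓ b' a ≤ gdist G ℓ a' b :=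
      le_gdist (hG.preconnected a' b) fun w1 => by have := t1 w1; linarith
    linarith
  have hcb2 : c ≤ ℓ a a' + gdist G ℓ a' b' + ℓ b b' + gdist G ℓ b a := by
    have t1 : ∀ w1 : G.Walk a' b', c - ℓ a a' - walkLen ℓ w1 - ℓ b b' ≤ gdist G ℓ b a :=
      fun w1 => le_gdist (hG.preconnected b a) fun w2 => by
        have := hstep2 w1 w2; linarith
    have t2 : c - ℓ a a' - ℓ b b' - gdist G ℓ b a ≤ gdist G ℓ a' b' :=
      le_gdist (hG.preconnected a' b') fun w1 => by have := t1 w1; linarith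
    linarith
  by_cases hq1 : ((a, a') : V × V) = (b, b')
  · rw [Prod.mk.injEq] at hq1
    obtain ⟨rfl, rfl⟩ := hq1
    -- b = a, b' = a'
    have hcs : c ≤ ℓ a a' + gdist G ℓ a' a := by
      have t1 : c - ℓ a a' ≤ gdist G ℓ a' a :=
        le_gdist (hG.preconnected a' a) fun w => by
          have : c ≤ ℓ a a' + walkLen ℓ w := by
            refine csInf_le hSbdd ⟨a, Walk.cons hab w, ?_, ?_, ?_⟩
            · simp [Walk.edges_cons]
            · simp [Walk.edges_cons]
            · rw [walkLen_cons]
          linarith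
      linarith
    have hgs : gdist G ℓ a' a = gdist G ℓ a a' := gdist_symm hsym hnn (hG.preconnected a' a)
    have hgle : gdist G ℓ a' a ≤ ℓ a' a := gdist_le_len hnn hab.symm
    have hbs : ℓ a' a = ℓ a a' := hsym a' a
    refine ⟨0, c / 2, ⟨le_refl 0, hnn a a'⟩, ⟨by linarith, by linarith⟩, ?_⟩
    have hpd : c / 2 ≤ pdist G ℓ (a, a', 0) (a, a', c / 2) := by
      refine le_pdist (hG.preconnected a a) ?_ ?_ ?_ ?_ ?_ ?_
      · intro w
        have := walkLen_nonneg hnn w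
        show c / 2 ≤ 0 + walkLen ℓ w + c / 2
        linarith
      · intro w
        have := gdist_le (G := G) (ℓ := ℓ) hnn w
        show c / 2 ≤ 0 + walkLen ℓ w + (ℓ a a' - c / 2)
        linarith
      · intro w
        have := walkLen_nonneg hnn w
        show c / 2 ≤ (ℓ a a' - 0) + walkLen ℓ w + c / 2
        linarith [hnn a a']
      · intro w
        have := walkLen_nonneg hnn w
        show c / 2 ≤ (ℓ a a' - 0) + walkLen ℓ w + (ℓ a a' - c / 2)
        linarith
      · intro _
        show c / 2 ≤ |(0 : ℝ) - c / 2|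
        rw [abs_of_nonpos (by linarith)]
        linarith
      · intro h
        rw [Prod.mk.injEq] at h
        exact absurd h.1 hab.ne
    linarith
  · by_cases hq2 : ((a, a') : V × V) = (b', b)
    · rw [Prod.mk.injEq] at hq2
      obtain ⟨rfl, rfl⟩ := hq2
      -- b = a', b' = a : p = (a, a', 0), q = (a', a, mu)
      have hcs : c ≤ ℓ a a' + gdist G ℓ a' a := by
        have t1 : c - ℓ a a' ≤ gdist G ℓ a' a :=
          le_gdist (hG.preconnected a' a) fun w => by
            have : c ≤ ℓ a a' + walkLen ℓ w := by
              refine csInf_le hSbdd ⟨a, Walk.cons hab w, ?_, ?_, ?_⟩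
              · simp [Walk.edges_cons]
              · simp [Walk.edges_cons, Sym2.eq_swap]
              · rw [walkLen_cons]
            linarith
        linarith
      have hgs : gdist G ℓ a' a = gdist G ℓ a a' := gdist_symm hsym hnn (hG.preconnected a' a)
      have hgle : gdist G ℓ a' a ≤ ℓ a' a := gdist_le_len hnn hab.symm
      have hbs : ℓ a' a = ℓ a a' := hsym a' a
      refine ⟨0, ℓ a' a - c / 2, ⟨le_refl 0, hnn a a'⟩,
        ⟨by linarith, by linarith⟩, ?_⟩
      have hpd : c / 2 ≤ pdist G ℓ (a, a', 0) (a', a, ℓ a' a - c / 2) := by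
        refine le_pdist (hG.preconnected a a') ?_ ?_ ?_ ?_ ?_ ?_
        · intro w
          have := gdist_le (G := G) (ℓ := ℓ) hnn w
          have hgs2 : gdist G ℓ a a' = gdist G ℓ a' a :=
            gdist_symm hsym hnn (hG.preconnected a a')
          show c / 2 ≤ 0 + walkLen ℓ w + (ℓ a' a - c / 2)
          linarith
        · intro w
          have := walkLen_nonneg hnn w
          show c / 2 ≤ 0 + walkLen ℓ w + (ℓ a' a - (ℓ a' a - c / 2))
          linarith
        · intro w
          have := walkLen_nonneg hnn w
          show c / 2 ≤ (ℓ a a' - 0) + walkLen ℓ w + (ℓ a' a - c / 2)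
          linarith
        · intro w
          have := walkLen_nonneg hnn w
          show c / 2 ≤ (ℓ a a' - 0) + walkLen ℓ w + (ℓ a' a - (ℓ a' a - c / 2))
          linarith
        · intro h
          rw [Prod.mk.injEq] at h
          exact absurd h.1 hab.ne
        · intro _
          show c / 2 ≤ |(0 : ℝ) - (ℓ a' a - (ℓ a' a - c / 2))|
          rw [show (0 : ℝ) - (ℓ a' a - (ℓ a' a - c / 2)) = -(c / 2) by ring,
            abs_neg, abs_of_nonneg (by linarith)]
      linarith
    · -- distinct edges
      set d1 := gdist G ℓ a b with hd1
      set d2 := gdist G ℓ a b' with hd2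
      set d3 := gdist G ℓ a' b with hd3
      set d4 := gdist G ℓ a' b' with hd4
      have hs2 : gdist G ℓ b' a = d2 := gdist_symm hsym hnn (hG.preconnected b' a)
      have hs1 : gdist G ℓ b a = d1 := gdist_symm hsym hnn (hG.preconnected b a)
      rw [hs2] at hcb1
      rw [hs1] at hcb2
      have hd13 : d1 ≤ ℓ a a' + d3 := gdist_le_edge_left hnn hab (hG.preconnected a' b)
      have hd31 : d3 ≤ ℓ a' a + d1 := gdist_le_edge_left hnn hab.symm (hG.preconnected a b)
      have hd43 : d4 ≤ d3 + ℓ b b' := gdist_le_edge_right hnn hbb (hG.preconnected a' b)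
      have hd34 : d3 ≤ d4 + ℓ b' b := gdist_le_edge_right hnn hbb.symm (hG.preconnected a' b')
      have hd12 : d1 ≤ d2 + ℓ b' b := gdist_le_edge_right hnn hbb.symm (hG.preconnected a b')
      have hd21 : d2 ≤ d1 + ℓ b b' := gdist_le_edge_right hnn hbb (hG.preconnected a b)
      have has : ℓ a' a = ℓ a a' := hsym a' a
      have hbs : ℓ b' b = ℓ b b' := hsym b' b
      set L := ℓ a a' with hL
      set M := ℓ b b' with hM
      set lam := (L + d3 - d1) / 2 with hlam
      set g := (L + d1 + d3) / 2 with hg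
      set mu := max 0 (c / 2 - g) with hmu
      have hmu0 : 0 ≤ mu := le_max_left _ _
      have hmug : c / 2 - g ≤ mu := le_max_right _ _
      have hmuM : mu ≤ M := max_le (hnn b b') (by linarith)
      have hmu_ub1 : mu ≤ lam + d2 + M - c / 2 := max_le (by linarith) (by linarith)
      have hmu_ub2 : mu ≤ (L - lam) + d4 + M - c / 2 := max_le (by linarith) (by linarith)
      refine ⟨lam, mu, ⟨by linarith, by linarith⟩, ⟨hmu0, hmuM⟩, ?_⟩
      have hpd : c / 2 ≤ pdist G ℓ (a, a', lam) (b, b', mu) := by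
        refine le_pdist (hG.preconnected a b) ?_ ?_ ?_ ?_ ?_ ?_
        · intro w
          have := gdist_le (G := G) (ℓ := ℓ) hnn w
          show c / 2 ≤ lam + walkLen ℓ w + mu
          linarith
        · intro w
          have := gdist_le (G := G) (ℓ := ℓ) hnn w
          show c / 2 ≤ lam + walkLen ℓ w + (ℓ b b' - mu)
          linarith
        · intro w
          have := gdist_le (G := G) (ℓ := ℓ) hnn w
          show c / 2 ≤ (ℓ a a' - lam) + walkLen ℓ w + mu
          linarith
        · intro w
          have := gdist_le (G := G) (ℓ := ℓ) hnn w
          show c / 2 ≤ (ℓ a a' - lam) + walkLen ℓ w + (ℓ b b' - mu)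
          linarith
        · intro h
          exact absurd h hq1
        · intro h
          exact absurd h hq2
      linarith

lemma sSup_eq_half_sSup {A B : Set ℝ}
    (h1 : ∀ x ∈ A, ∃ y ∈ B, 2 * x ≤ y) (h2 : ∀ y ∈ B, ∃ x ∈ A, y ≤ 2 * x) :
    sSup A = (1 / 2) * sSup B := by
  rcases A.eq_empty_or_nonempty with rfl | hA
  · have hB : B = ∅ := by
      rw [Set.eq_empty_iff_forall_notMem]
      intro y hy
      obtain ⟨x, hx, -⟩ := h2 y hy
      exact hx
    rw [hB, Real.sSup_empty]
    norm_num
  · have hBne : B.Nonempty := by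
      obtain ⟨x, hx⟩ := hA
      obtain ⟨y, hy, -⟩ := h1 x hx
      exact ⟨y, hy⟩
    by_cases hbd : BddAbove A
    · have hBbd : BddAbove B := by
        obtain ⟨m, hm⟩ := hbd
        refine ⟨2 * m, fun y hy => ?_⟩
        obtain ⟨x, hx, hxy⟩ := h2 y hy
        have := hm hx
        linarith
      apply le_antisymm
      · refine csSup_le hA fun x hx => ?_
        obtain ⟨y, hy, hxy⟩ := h1 x hx
        have := le_csSup hBbd hy
        linarith
      · have : sSup B ≤ 2 * sSup A := csSup_le hBne fun y hy => by
          obtain ⟨x, hx, hxy⟩ := h2 y hy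
          have := le_csSup hbd hx
          linarith
        linarith
    · have hBbd : ¬ BddAbove B := by
        rintro ⟨m, hm⟩
        refine hbd ⟨m / 2, fun x hx => ?_⟩
        obtain ⟨y, hy, hxy⟩ := h1 x hx
        have := hm hy
        linarith
      rw [Real.sSup_of_not_bddAbove hbd, Real.sSup_of_not_bddAbove hBbd]
      norm_num

end Main

/-- Let `H` be a connected subgraph of a connected weighted graph `G` with nonnegative
edge lengths, defining continuous graphs `ℋ ⊆ 𝒢`. The diameter of `ℋ` with respect to
`𝒢`, i.e. the supremum over points `p, q` of `ℋ` of `d_𝒢(p,q)`, equals one half of the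
maximum over ordered pairs of edges `aa'`, `bb'` of `H` of the length of a shortest
closed walk in `G` passing through all interior points of `aa'` and of `bb'`. -/
theorem diam_eq_half_max_closed_walk (G H : SimpleGraph V) (hG : G.Connected)
    (hHG : H ≤ G) (hH : H.Connected)
    (ℓ : V → V → ℝ) (hsym : ∀ u v, ℓ u v = ℓ v u) (hnn : ∀ u v, 0 ≤ ℓ u v) :
    sSup {x | ∃ a a' b b' : V, ∃ lam mu : ℝ,
        H.Adj a a' ∧ H.Adj b b' ∧
        lam ∈ Set.Icc 0 (ℓ a a') ∧ mu ∈ Set.Icc 0 (ℓ b b') ∧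
        pdist G ℓ (a, a', lam) (b, b', mu) = x}
    = (1/2) * sSup {x | ∃ a a' b b' : V, H.Adj a a' ∧ H.Adj b b' ∧
        x = sInf {y | ∃ (r : V) (w : G.Walk r r),
          s(a, a') ∈ w.edges ∧ s(b, b') ∈ w.edges ∧ walkLen ℓ w = y}} := by
  rw [show (1/2 : ℝ) = 1 / 2 by norm_num]
  refine sSup_eq_half_sSup ?_ ?_
  · rintro x ⟨a, a', b, b', lam, mu, hab, hbb, hl, hm, rfl⟩
    exact ⟨_, ⟨a, a', b, b', hab, hbb, rfl⟩,
      two_pdist_le hG hsym hnn (hHG hab) (hHG hbb) hl hm⟩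
  · rintro y ⟨a, a', b, b', hab, hbb, rfl⟩
    obtain ⟨lam, mu, hl, hm, hle⟩ := sInf_le_two_pdist hG hsym hnn (hHG hab) (hHG hbb)
    exact ⟨_, ⟨a, a', b, b', lam, mu, hab, hbb, hl, hm, rfl⟩, hle⟩
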